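/- arXiv:2402.06019 — 2 statements merged into one kernel-verified Lean document; each statement's English description precedes it below -/
import Mathlib

section
/- The cone generated by the columns of eeᵀ − I (i.e., by the vectors e − e_i, i ∈ [r]) is contained in the cone C = {x ∈ ℝ^r : eᵀx ≥ √(r-1)·‖x‖₂}. -/
noncomputable def enorm2 {r : ℕ} (x : Fin r → ℝ) : ℝ := Real.sqrt (∑ i, (x i) ^ 2)

def sscCone (r : ℕ) : Set (Fin r → ℝ) :=
  {x | Real.sqrt ((r : ℝ) - 1) * enorm2 x ≤ ∑ i, x i}

def coneOf {r n : ℕ} (H : Matrix (Fin r) (Fin n) ℝ) : Set (Fin r → ℝ) :=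
  {x | ∃ y : Fin n → ℝ, (∀ j, 0 ≤ y j) ∧ H.mulVec y = x}

/-- `cone(eeᵀ - I) ⊆ C`. -/
theorem cone_ee_sub_I_subset_sscCone {r : ℕ} (hr : 2 ≤ r) :
    coneOf ((Matrix.of fun _ _ => (1 : ℝ)) - (1 : Matrix (Fin r) (Fin r) ℝ)) ⊆ sscCone r := by
  rintro x ⟨y, hy, rfl⟩
  set A : Matrix (Fin r) (Fin r) ℝ := (Matrix.of fun _ _ => (1 : ℝ)) - 1 with hA
  set s := ∑ j, y j with hs
  have hs0 : 0 ≤ s := Finset.sum_nonneg fun j _ => hy j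
  have hxi : ∀ i, A.mulVec y i = s - y i := by
    intro i
    simp [hA, Matrix.mulVec, Matrix.sub_apply, Matrix.one_apply, dotProduct, sub_mul,
      Finset.sum_sub_distrib, hs, Finset.sum_ite_eq, ite_mul]
  have hrr : (1 : ℝ) ≤ (r : ℝ) - 1 := by
    have : (2 : ℝ) ≤ (r : ℝ) := by exact_mod_cast hr
    linarith
  have hsumx : ∑ i, A.mulVec y i = ((r : ℝ) - 1) * s := by
    simp only [hxi]
    rw [Finset.sum_sub_distrib]
    simp [← hs, mul_comm]
    ring
  have hysq : ∑ j, (y j) ^ 2 ≤ s ^ 2 := by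
    have h1 : ∀ j ∈ Finset.univ, (y j) ^ 2 ≤ y j * s := by
      intro j _
      have hjs : y j ≤ s := Finset.single_le_sum (fun k _ => hy k) (Finset.mem_univ j)
      have := mul_le_mul_of_nonneg_left hjs (hy j)
      nlinarith
    calc ∑ j, (y j) ^ 2 ≤ ∑ j, y j * s := Finset.sum_le_sum h1
      _ = s ^ 2 := by rw [← Finset.sum_mul, ← hs]; ring
  have hsumsq : ∑ i, (A.mulVec y i) ^ 2
      ≤ ((r : ℝ) - 1) * s ^ 2 := by
    simp only [hxi]
    have : ∑ i : Fin r, (s - y i) ^ 2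
        = (r : ℝ) * s ^ 2 - 2 * s * s + ∑ j, (y j) ^ 2 := by
      have expand : ∀ i : Fin r, (s - y i) ^ 2 = s ^ 2 - 2 * s * y i + (y i) ^ 2 := by
        intro i; ring
      simp only [expand]
      rw [Finset.sum_add_distrib, Finset.sum_sub_distrib, ← Finset.mul_sum, ← hs]
      simp [mul_comm]
    rw [this]
    nlinarith
  show Real.sqrt ((r : ℝ) - 1) * enorm2 (A.mulVec y) ≤ ∑ i, A.mulVec y i
  rw [enorm2, hsumx]
  calc Real.sqrt ((r : ℝ) - 1) * Real.sqrt (∑ i, (A.mulVec y i) ^ 2)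
      = Real.sqrt (((r : ℝ) - 1) * ∑ i, (A.mulVec y i) ^ 2) := by
        rw [← Real.sqrt_mul (by linarith)]
    _ ≤ Real.sqrt ((((r : ℝ) - 1) * s) ^ 2) := by
        apply Real.sqrt_le_sqrt
        nlinarith [Finset.sum_nonneg (fun i (_ : i ∈ Finset.univ) =>
          sq_nonneg (A.mulVec y i))]
    _ = ((r : ℝ) - 1) * s := Real.sqrt_sq (by nlinarith)
end

section
/- A matrix H ∈ ℝ₊^{r×n} satisfies the SSC if and only if (i) H satisfies the NC-SSC, and (ii) the maximum of ‖x‖₂ over {x : eᵀx = 1, Hᵀx ≥ 0, −1 ≤ x_i ≤ 1 ∀i} equals 1 with the set of maximizers equal to {e_i}_{i=1}^r. -/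
open scoped InnerProductSpace

namespace SSCAux

variable {r n : ℕ}

lemma enorm_nonneg (x : Fin r → ℝ) : 0 ≤ enorm2 x := Real.sqrt_nonneg _

lemma enorm_sq (x : Fin r → ℝ) : enorm2 x ^ 2 = ∑ i, (x i) ^ 2 :=
  Real.sq_sqrt (by positivity)

lemma enorm_eq_zero {x : Fin r → ℝ} (h : enorm2 x = 0) : x = 0 := by
  have h2 : ∑ i, (x i) ^ 2 = 0 := by
    have := enorm_sq x; rw [h] at this; linarith [this]
  funext i
  have := (Finset.sum_eq_zero_iff_of_nonneg (fun i _ => sq_nonneg (x i))).mp h2 i (Finset.mem_univ i)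
  exact pow_eq_zero_iff (n := 2) (by norm_num) |>.mp this

lemma sum_ite_one (i : Fin r) : ∑ k, (if k = i then (1:ℝ) else 0) = 1 := by simp

lemma sum_ite_sq (i : Fin r) : ∑ k, (if k = i then (1:ℝ) else 0) ^ 2 = 1 := by
  simp [pow_two, ite_mul, mul_ite]

lemma enorm_single (i : Fin r) : enorm2 (fun k => if k = i then (1:ℝ) else 0) = 1 := by
  unfold enorm2; rw [sum_ite_sq]; exact Real.sqrt_one

lemma enorm_smul (c : ℝ) (hc : 0 ≤ c) (x : Fin r → ℝ) :
    enorm2 (fun i => c * x i) = c * enorm2 x := by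
  unfold enorm2
  rw [show ∑ i, (c * x i)^2 = c^2 * ∑ i, (x i)^2 by rw [Finset.mul_sum]; congr 1; funext i; ring,
    Real.sqrt_mul (by positivity), Real.sqrt_sq hc]


/-- If `z ∈ cone(H)` and `Hᵀx ≥ 0` then `⟨z,x⟩ ≥ 0`. -/
lemma inner_nonneg_of_mem {H : Matrix (Fin r) (Fin n) ℝ} {z x : Fin r → ℝ}
    (hz : z ∈ coneOf H) (hx : ∀ j, 0 ≤ ∑ i, H i j * x i) : 0 ≤ ∑ i, z i * x i := by
  obtain ⟨y, hy, rfl⟩ := hz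
  have : ∑ i, H.mulVec y i * x i = ∑ j, y j * ∑ i, H i j * x i := by
    simp only [Matrix.mulVec, dotProduct, Finset.sum_mul]
    rw [Finset.sum_comm]
    refine Finset.sum_congr rfl fun j _ => ?_
    rw [Finset.mul_sum]
    exact Finset.sum_congr rfl fun i _ => by ring
  rw [this]
  exact Finset.sum_nonneg fun j _ => mul_nonneg (hy j) (hx j)


set_option maxHeartbeats 800000 in
lemma key_inner (hr : 2 ≤ r) (z q : Fin r → ℝ)
    (hz : Real.sqrt ((r:ℝ) - 1) * enorm2 z ≤ ∑ i, z i)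
    (hq : enorm2 q ≤ ∑ i, q i) : 0 ≤ ∑ i, z i * q i := by
  set a := ∑ i, z i with ha_def
  set b := ∑ i, q i with hb_def
  have hr1 : (1:ℝ) ≤ (r:ℝ) - 1 := by
    have : (2:ℝ) ≤ (r:ℝ) := by exact_mod_cast hr
    linarith
  have ha : 0 ≤ a := le_trans (mul_nonneg (Real.sqrt_nonneg _) (enorm_nonneg _)) hz
  have hb : 0 ≤ b := le_trans (enorm_nonneg q) hq
  have hA : ((r:ℝ) - 1) * (∑ i, (z i)^2) ≤ a ^ 2 := by
    have h1 : (Real.sqrt ((r:ℝ) - 1) * enorm2 z) ^ 2 ≤ a ^ 2 :=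
      pow_le_pow_left₀ (mul_nonneg (Real.sqrt_nonneg _) (enorm_nonneg _)) hz 2
    rwa [mul_pow, Real.sq_sqrt (by linarith), enorm_sq] at h1
  have hB : (∑ i, (q i)^2) ≤ b ^ 2 := by
    have h1 : (enorm2 q) ^ 2 ≤ b ^ 2 := pow_le_pow_left₀ (enorm_nonneg q) hq 2
    rwa [enorm_sq] at h1
  have CS := Finset.sum_mul_sq_le_sq_mul_sq Finset.univ
    (fun i => (r:ℝ) * z i - a) (fun i => (r:ℝ) * q i - b)
  have card : (Finset.univ : Finset (Fin r)).card = r := by simp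
  have e1 : ∑ i, ((r:ℝ) * z i - a) * ((r:ℝ) * q i - b)
      = (r:ℝ)^2 * (∑ i, z i * q i) - (r:ℝ) * a * b := by
    have h : ∀ i : Fin r, ((r:ℝ) * z i - a) * ((r:ℝ) * q i - b)
        = (r:ℝ)^2 * (z i * q i) - ((r:ℝ) * b) * z i - ((r:ℝ) * a) * q i + a * b := fun i => by ring
    rw [Finset.sum_congr rfl fun i _ => h i]
    simp only [Finset.sum_add_distrib, Finset.sum_sub_distrib, ← Finset.mul_sum,
      Finset.sum_const, card, nsmul_eq_mul, ← ha_def, ← hb_def]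
    ring
  have e2 : ∑ i, ((r:ℝ) * z i - a) ^ 2 = (r:ℝ)^2 * (∑ i, (z i)^2) - (r:ℝ) * a ^ 2 := by
    have h : ∀ i : Fin r, ((r:ℝ) * z i - a) ^ 2
        = (r:ℝ)^2 * (z i)^2 - (2 * (r:ℝ) * a) * z i + a^2 := fun i => by ring
    rw [Finset.sum_congr rfl fun i _ => h i]
    simp only [Finset.sum_add_distrib, Finset.sum_sub_distrib, ← Finset.mul_sum,
      Finset.sum_const, card, nsmul_eq_mul, ← ha_def]
    ring
  have e3 : ∑ i, ((r:ℝ) * q i - b) ^ 2 = (r:ℝ)^2 * (∑ i, (q i)^2) - (r:ℝ) * b ^ 2 := by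
    have h : ∀ i : Fin r, ((r:ℝ) * q i - b) ^ 2
        = (r:ℝ)^2 * (q i)^2 - (2 * (r:ℝ) * b) * q i + b^2 := fun i => by ring
    rw [Finset.sum_congr rfl fun i _ => h i]
    simp only [Finset.sum_add_distrib, Finset.sum_sub_distrib, ← Finset.mul_sum,
      Finset.sum_const, card, nsmul_eq_mul, ← hb_def]
    ring
  rw [e1, e2, e3] at CS
  set S := ∑ i, (z i)^2 with hS_def
  set T := ∑ i, (q i)^2 with hT_def
  set P := ∑ i, z i * q i with hP_def
  have hS0 : 0 ≤ S := Finset.sum_nonneg fun i _ => sq_nonneg _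
  have hT0 : 0 ≤ T := Finset.sum_nonneg fun i _ => sq_nonneg _
  have hSc : 0 ≤ (r:ℝ)^2 * S - (r:ℝ) * a^2 := by
    rw [← e2]; exact Finset.sum_nonneg fun i _ => sq_nonneg _
  have hTc : 0 ≤ (r:ℝ)^2 * T - (r:ℝ) * b^2 := by
    rw [← e3]; exact Finset.sum_nonneg fun i _ => sq_nonneg _
  have hrpos : (0:ℝ) < r := by linarith
  set R := (r:ℝ) with hR
  have hu : (R - 1) * (R^2 * S - R * a^2) ≤ R * a^2 := by
    nlinarith [mul_le_mul_of_nonneg_left hA (by positivity : (0:ℝ) ≤ R^2)]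
  have hv : R^2 * T - R * b^2 ≤ R * (R - 1) * b^2 := by
    nlinarith [mul_le_mul_of_nonneg_left hB (by positivity : (0:ℝ) ≤ R^2)]
  have ha2 : (0:ℝ) ≤ R * a^2 := by positivity
  have h1 : (R - 1) * ((R^2 * S - R * a^2) * (R^2 * T - R * b^2))
      ≤ (R - 1) * (R^2 * a^2 * b^2) := by
    calc (R - 1) * ((R^2 * S - R * a^2) * (R^2 * T - R * b^2))
        = ((R - 1) * (R^2 * S - R * a^2)) * (R^2 * T - R * b^2) := by ring
      _ ≤ (R * a^2) * (R^2 * T - R * b^2) := mul_le_mul_of_nonneg_right hu hTc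
      _ ≤ (R * a^2) * (R * (R - 1) * b^2) := mul_le_mul_of_nonneg_left hv ha2
      _ = (R - 1) * (R^2 * a^2 * b^2) := by ring
  have huv : (R^2 * S - R * a^2) * (R^2 * T - R * b^2) ≤ R^2 * a^2 * b^2 :=
    le_of_mul_le_mul_left (by linarith) (by linarith : (0:ℝ) < R - 1)
  have hsq : (R^2 * P - R * a * b)^2 ≤ (R * a * b)^2 := by
    calc (R^2 * P - R * a * b)^2 ≤ (R^2 * S - R * a^2) * (R^2 * T - R * b^2) := CS
      _ ≤ R^2 * a^2 * b^2 := huv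
      _ = (R * a * b)^2 := by ring
  by_contra hP
  push_neg at hP
  have hP2 : 0 < P ^ 2 := by nlinarith [mul_pos_of_neg_of_neg hP hP]
  have k1 : 0 < R^4 * P^2 := mul_pos (pow_pos hrpos 4) hP2
  have k2 : 0 ≤ R^3 * ((-P) * (a * b)) :=
    mul_nonneg (pow_nonneg hrpos.le 3) (mul_nonneg (by linarith) (mul_nonneg ha hb))
  nlinarith [k1, k2, hsq]


/-- cone generated by the columns of `H` indexed by `s` -/
def coneOn (H : Matrix (Fin r) (Fin n) ℝ) (s : Finset (Fin n)) : Set (Fin r → ℝ) :=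
  {x | ∃ y : Fin n → ℝ, (∀ j, 0 ≤ y j) ∧ (∀ j ∉ s, y j = 0) ∧ H.mulVec y = x}

lemma mulVec_eq_sum_attach (H : Matrix (Fin r) (Fin n) ℝ) (s : Finset (Fin n))
    (y : Fin n → ℝ) (hsupp : ∀ j ∉ s, y j = 0) :
    H.mulVec y = ∑ j ∈ s.attach, y j.1 • (fun i => H i j.1) := by
  funext i
  rw [Finset.sum_apply]
  simp only [Pi.smul_apply, smul_eq_mul]
  rw [Matrix.mulVec, dotProduct]
  rw [← Finset.sum_subset s.subset_univ (fun j _ hj => by rw [hsupp j hj, mul_zero])]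
  rw [← Finset.sum_attach s fun j => H i j * y j]
  exact Finset.sum_congr rfl fun j _ => mul_comm _ _

lemma coneOn_closed (H : Matrix (Fin r) (Fin n) ℝ) (s : Finset (Fin n))
    (hs : LinearIndependent ℝ (fun j : {j // j ∈ s} => (fun i => H i j.1 : Fin r → ℝ))) :
    IsClosed (coneOn H s) := by
  classical
  set v : {j // j ∈ s} → (Fin r → ℝ) := fun j => fun i => H i j.1 with hv
  let L : ({j // j ∈ s} → ℝ) →ₗ[ℝ] (Fin r → ℝ) :=
    { toFun := fun w => ∑ j, w j • v j
      map_add' := fun w₁ w₂ => by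
        simp only [Pi.add_apply, add_smul]; rw [Finset.sum_add_distrib]
      map_smul' := fun c w => by
        simp only [Pi.smul_apply, smul_eq_mul, RingHom.id_apply, Finset.smul_sum, smul_smul] }
  have hker : LinearMap.ker L = ⊥ := by
    rw [LinearMap.ker_eq_bot']
    intro w hw
    exact funext (Fintype.linearIndependent_iff.mp hs w hw)
  have hemb := LinearMap.isClosedEmbedding_of_injective hker
  have hposcl : IsClosed {w : {j // j ∈ s} → ℝ | ∀ j, 0 ≤ w j} := by
    have : {w : {j // j ∈ s} → ℝ | ∀ j, 0 ≤ w j} = ⋂ j, {w | 0 ≤ w j} := by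
      ext w; simp [Set.mem_iInter]
    rw [this]
    exact isClosed_iInter fun j => isClosed_le continuous_const (continuous_apply j)
  have himg : coneOn H s = L '' {w | ∀ j, 0 ≤ w j} := by
    ext x
    constructor
    · rintro ⟨y, hy, hsupp, rfl⟩
      refine ⟨fun j => y j.1, fun j => hy _, ?_⟩
      show ∑ j, y j.1 • v j = H.mulVec y
      rw [mulVec_eq_sum_attach H s y hsupp]
      rfl
    · rintro ⟨w, hw, rfl⟩
      refine ⟨fun j => if h : j ∈ s then w ⟨j, h⟩ else 0,
        fun j => ?_, fun j hj => by simp [hj], ?_⟩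
      · by_cases h : j ∈ s
        · simpa [h] using hw ⟨j, h⟩
        · simp [h]
      rw [mulVec_eq_sum_attach H s _ (fun j hj => by simp [hj])]
      show _ = ∑ j, w j • v j
      refine Finset.sum_congr rfl fun j _ => ?_
      rw [dif_pos j.2]
  rw [himg]
  exact (hemb.isClosedMap _ hposcl)

lemma caratheodory (H : Matrix (Fin r) (Fin n) ℝ) (s : Finset (Fin n)) :
    ∀ y : Fin n → ℝ, (∀ j, 0 ≤ y j) → (∀ j ∉ s, y j = 0) →
    ∃ t : Finset (Fin n),
      LinearIndependent ℝ (fun j : {j // j ∈ t} => (fun i => H i j.1 : Fin r → ℝ)) ∧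
      H.mulVec y ∈ coneOn H t := by
  classical
  induction s using Finset.strongInduction with
  | _ s ih =>
    intro y hy hsupp
    by_cases hli : LinearIndependent ℝ (fun j : {j // j ∈ s} => (fun i => H i j.1 : Fin r → ℝ))
    · exact ⟨s, hli, y, hy, hsupp, rfl⟩
    · obtain ⟨g, hg0, i0, hgi0⟩ := Fintype.not_linearIndependent_iff.mp hli
      set c : Fin n → ℝ := fun j => if h : j ∈ s then g ⟨j, h⟩ else 0 with hc
      have hcs : ∀ j ∉ s, c j = 0 := fun j hj => by simp [hc, hj]
      have hmvc : H.mulVec c = 0 := by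
        rw [mulVec_eq_sum_attach H s c hcs]
        rw [← hg0]
        refine Finset.sum_congr rfl fun j _ => ?_
        rw [hc]
        simp only [dif_pos j.2]
      have hci0 : c i0.1 = g i0 := by rw [hc]; simp only [dif_pos i0.2]
      obtain ⟨d, hd_supp, hmvd, j1, hj1s, hj1pos⟩ :
          ∃ d : Fin n → ℝ, (∀ j ∉ s, d j = 0) ∧ H.mulVec d = 0 ∧ ∃ j ∈ s, 0 < d j := by
        rcases lt_trichotomy (c i0.1) 0 with h | h | h
        · refine ⟨-c, fun j hj => by simp [hcs j hj], by simp [Matrix.mulVec_neg, hmvc], i0.1, i0.2, ?_⟩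
          simp only [Pi.neg_apply]; linarith
        · rw [hci0] at h; exact absurd h hgi0
        · exact ⟨c, hcs, hmvc, i0.1, i0.2, h⟩
      set T := s.filter (fun j => 0 < d j) with hT
      have hTne : T.Nonempty := ⟨j1, Finset.mem_filter.mpr ⟨hj1s, hj1pos⟩⟩
      obtain ⟨j0, hj0T, hj0min⟩ := Finset.exists_min_image T (fun j => y j / d j) hTne
      have hj0s : j0 ∈ s := (Finset.mem_filter.mp hj0T).1
      have hdj0 : 0 < d j0 := (Finset.mem_filter.mp hj0T).2
      set t0 : ℝ := y j0 / d j0 with ht0_def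
      have ht0 : 0 ≤ t0 := div_nonneg (hy _) hdj0.le
      set z : Fin n → ℝ := fun j => y j - t0 * d j with hz
      have hz0 : ∀ j, 0 ≤ z j := by
        intro j
        by_cases hdj : 0 < d j
        · by_cases hjs : j ∈ s
          · have hjT : j ∈ T := Finset.mem_filter.mpr ⟨hjs, hdj⟩
            have hmin := hj0min j hjT
            have : t0 * d j ≤ y j := by
              have h2 := mul_le_mul_of_nonneg_right hmin hdj.le
              rwa [div_mul_cancel₀ _ hdj.ne'] at h2
            simp only [hz]; linarith
          · exact absurd (hd_supp j hjs) (by positivity)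
        · push_neg at hdj
          have : t0 * d j ≤ 0 := mul_nonpos_of_nonneg_of_nonpos ht0 hdj
          simp only [hz]; linarith [hy j]
      have hzsupp : ∀ j ∉ s.erase j0, z j = 0 := by
        intro j hj
        by_cases hjj0 : j = j0
        · subst hjj0; simp only [hz, ht0_def]; field_simp; ring
        · have hjs : j ∉ s := by
            intro hjs; exact hj (Finset.mem_erase.mpr ⟨hjj0, hjs⟩)
          simp only [hz, hsupp j hjs, hd_supp j hjs, mul_zero, sub_zero]
      have hmz : H.mulVec z = H.mulVec y := by
        have : z = y - t0 • d := by funext j; simp [hz, smul_eq_mul]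
        rw [this, Matrix.mulVec_sub, Matrix.mulVec_smul, hmvd, smul_zero, sub_zero]
      obtain ⟨t, hli', hmem⟩ := ih (s.erase j0) (Finset.erase_ssubset hj0s) z hz0 hzsupp
      exact ⟨t, hli', hmz ▸ hmem⟩

lemma coneOf_isClosed (H : Matrix (Fin r) (Fin n) ℝ) : IsClosed (coneOf H) := by
  classical
  have hunion : coneOf H =
      ⋃ t : {t : Finset (Fin n) //
        LinearIndependent ℝ (fun j : {j // j ∈ t.1} => (fun i => H i j.1 : Fin r → ℝ))},
        coneOn H t.1 := by
    ext x
    constructor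
    · rintro ⟨y, hy, rfl⟩
      obtain ⟨t, hli, hm⟩ := caratheodory H Finset.univ y hy (by simp)
      exact Set.mem_iUnion.mpr ⟨⟨t, hli⟩, hm⟩
    · intro hx
      obtain ⟨t, hm⟩ := Set.mem_iUnion.mp hx
      obtain ⟨y, hy, _, rfl⟩ := hm
      exact ⟨y, hy, rfl⟩
  rw [hunion]
  exact isClosed_iUnion_of_finite fun t => coneOn_closed H t.1 t.2


lemma farkas_step (hr : 2 ≤ r) (H : Matrix (Fin r) (Fin n) ℝ)
    (hdual : ∀ q : Fin r → ℝ, (∀ j, 0 ≤ ∑ i, H i j * q i) → enorm2 q ≤ ∑ i, q i) :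
    sscCone r ⊆ coneOf H := by
  intro z hz
  by_contra hzK
  classical
  let E := EuclideanSpace ℝ (Fin r)
  let K : ProperCone ℝ E :=
    { carrier := {x : E | WithLp.ofLp x ∈ coneOf H}
      smul_mem' := by
        rintro c x ⟨y, hy, hxy⟩
        exact ⟨(c:ℝ) • y, fun j => mul_nonneg c.2 (hy j), by rw [Matrix.mulVec_smul, hxy]; rfl⟩
      zero_mem' := ⟨0, fun j => le_refl 0, by rw [Matrix.mulVec_zero]; rfl⟩
      add_mem' := by
        rintro x x' ⟨y, hy, hxy⟩ ⟨y', hy', hxy'⟩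
        exact ⟨y + y', fun j => add_nonneg (hy j) (hy' j), by rw [Matrix.mulVec_add, hxy, hxy']; rfl⟩
      isClosed' := (coneOf_isClosed H).preimage (PiLp.continuous_ofLp 2 _) }
  have hzK' : (WithLp.toLp 2 z : E) ∉ K := hzK
  obtain ⟨q, hqK, hqz⟩ :=
    ProperCone.hyperplane_separation' K hzK'
  have hinner : ∀ x y : E, ⟪x, y⟫_ℝ = ∑ i, x i * y i := by
    intro x y
    rw [PiLp.inner_apply]
    exact Finset.sum_congr rfl fun i _ => by rw [RCLike.inner_apply', starRingEnd_apply, star_trivial]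
  have hq : ∀ j, 0 ≤ ∑ i, H i j * q i := by
    intro j
    have hcol : (fun i => H i j : Fin r → ℝ) ∈ coneOf H := by
      refine ⟨Pi.single j 1, fun k => ?_, ?_⟩
      · by_cases h : k = j <;> simp [Pi.single_apply, h]
      · funext i
        simp [Matrix.mulVec, dotProduct, Pi.single_apply]
    have := hqK (WithLp.toLp 2 _) hcol
    rw [hinner] at this
    exact this
  have hge := key_inner hr z (WithLp.ofLp q) hz (hdual q hq)
  rw [hinner] at hqz
  have : ∑ i, q i * z i = ∑ i, z i * q i := Finset.sum_congr rfl fun i _ => mul_comm _ _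
  change ∑ i, z i * q i < 0 at hqz
  linarith


lemma rR (hr : 2 ≤ r) : (2:ℝ) ≤ (r:ℝ) := by exact_mod_cast hr

lemma sum_one_sub_single_mul (i : Fin r) (x : Fin r → ℝ) :
    ∑ k, (1 - (if k = i then (1:ℝ) else 0)) * x k = (∑ k, x k) - x i := by
  have h : ∀ k, (1 - (if k = i then (1:ℝ) else 0)) * x k
      = x k - (if k = i then x k else 0) := by
    intro k; split <;> ring
  rw [Finset.sum_congr rfl fun k _ => h k, Finset.sum_sub_distrib]
  congr 1
  simp

/-- The NC-SSC vectors `e - eᵢ` lie in the cone `C`. -/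
lemma ncvec_mem_sscCone (hr : 2 ≤ r) (i : Fin r) :
    (fun k => (1:ℝ) - (if k = i then 1 else 0)) ∈ sscCone r := by
  have hsum : ∑ k, ((1:ℝ) - (if k = i then 1 else 0)) = (r:ℝ) - 1 := by
    have := sum_one_sub_single_mul i (fun _ => (1:ℝ))
    simpa using this
  have hsq : ∑ k, ((1:ℝ) - (if k = i then 1 else 0)) ^ 2 = (r:ℝ) - 1 := by
    have h : ∀ k : Fin r, ((1:ℝ) - (if k = i then 1 else 0)) ^ 2
        = (1:ℝ) - (if k = i then 1 else 0) := by
      intro k; split <;> norm_num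
    rw [Finset.sum_congr rfl fun k _ => h k, hsum]
  show Real.sqrt ((r:ℝ) - 1) * enorm2 _ ≤ _
  rw [hsum]
  have : enorm2 (fun k => (1:ℝ) - (if k = i then 1 else 0)) = Real.sqrt ((r:ℝ) - 1) := by
    unfold enorm2; rw [hsq]
  rw [this, Real.mul_self_sqrt (by linarith [rR hr])]

/-- Forward: SSC1 implies the QP bound (box constraints not needed). -/
lemma qp_bound_of_ssc1 (hr : 2 ≤ r) (H : Matrix (Fin r) (Fin n) ℝ)
    (hssc1 : sscCone r ⊆ coneOf H) (x : Fin r → ℝ) (hsum : (∑ i, x i) = 1)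
    (hx : ∀ j, 0 ≤ ∑ i, H i j * x i) : enorm2 x ≤ 1 := by
  by_contra hN
  push_neg at hN
  set N := enorm2 x with hNdef
  have hN0 : 0 < N := lt_trans one_pos hN
  set u : ℝ := 1 / N with hu
  have hu0 : 0 < u := by positivity
  have hu1 : u < 1 := by rw [hu]; rw [div_lt_one hN0]; exact hN
  have hxsq : ∑ i, (x i)^2 = N^2 := (enorm_sq x).symm
  set z : Fin r → ℝ := fun i => 1 - u * x i with hz
  have hzsum : ∑ i, z i = (r:ℝ) - u := by
    simp only [hz]
    rw [Finset.sum_sub_distrib, ← Finset.mul_sum, hsum, Finset.sum_const, Finset.card_univ,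
      Fintype.card_fin, nsmul_eq_mul, mul_one, mul_one]
  have hzsq : ∑ i, (z i)^2 = (r:ℝ) + 1 - 2*u := by
    have h : ∀ i, (z i)^2 = 1 - (2*u) * x i + u^2 * (x i)^2 := by
      intro i; simp only [hz]; ring
    rw [Finset.sum_congr rfl fun i _ => h i]
    rw [Finset.sum_add_distrib, Finset.sum_sub_distrib, ← Finset.mul_sum, ← Finset.mul_sum,
      hsum, hxsq, Finset.sum_const, Finset.card_univ, Fintype.card_fin, nsmul_eq_mul, mul_one]
    have : u^2 * N^2 = 1 := by
      rw [hu]; field_simp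
    rw [this]; ring
  have hzC : z ∈ sscCone r := by
    show Real.sqrt ((r:ℝ) - 1) * enorm2 z ≤ ∑ i, z i
    rw [hzsum]
    have hrineq : ((r:ℝ) - 1) * ((r:ℝ) + 1 - 2*u) ≤ ((r:ℝ) - u)^2 := by nlinarith [rR hr]
    have hru : 0 ≤ (r:ℝ) - u := by linarith [rR hr]
    have h1 : Real.sqrt ((r:ℝ) - 1) * enorm2 z = Real.sqrt (((r:ℝ) - 1) * ((r:ℝ) + 1 - 2*u)) := by
      unfold enorm2
      rw [hzsq, ← Real.sqrt_mul (by linarith [rR hr])]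
    rw [h1]
    calc Real.sqrt (((r:ℝ) - 1) * ((r:ℝ) + 1 - 2*u)) ≤ Real.sqrt (((r:ℝ) - u)^2) :=
          Real.sqrt_le_sqrt hrineq
      _ = (r:ℝ) - u := Real.sqrt_sq hru
  have hpos := inner_nonneg_of_mem (hssc1 hzC) hx
  have : ∑ i, z i * x i = 1 - u * N^2 := by
    have h : ∀ i, z i * x i = x i - u * (x i)^2 := by intro i; simp only [hz]; ring
    rw [Finset.sum_congr rfl fun i _ => h i, Finset.sum_sub_distrib, ← Finset.mul_sum, hsum, hxsq]
  rw [this] at hpos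
  have : u * N^2 = N := by rw [hu]; field_simp
  rw [this] at hpos
  linarith

/-- Backward: feasible points automatically satisfy the box constraints. -/
lemma box_of_feasible (hr : 2 ≤ r) (H : Matrix (Fin r) (Fin n) ℝ) (hH : ∀ i j, 0 ≤ H i j)
    (ncssc : ∀ i : Fin r, (fun j => (1:ℝ) - (if j = i then 1 else 0)) ∈ coneOf H)
    (hb : ∀ x : Fin r → ℝ, (∑ i, x i) = 1 → (∀ j, 0 ≤ ∑ i, H i j * x i) →
        (∀ i, -1 ≤ x i ∧ x i ≤ 1) → enorm2 x ≤ 1)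
    (x : Fin r → ℝ) (hsum : (∑ i, x i) = 1) (hx : ∀ j, 0 ≤ ∑ i, H i j * x i) :
    ∀ i, -1 ≤ x i ∧ x i ≤ 1 := by
  have hrR := rR hr
  have hrpos : (0:ℝ) < r := by linarith
  have hub : ∀ i, x i ≤ 1 := by
    intro i
    have := inner_nonneg_of_mem (ncssc i) hx
    rw [sum_one_sub_single_mul i x, hsum] at this
    linarith
  intro i
  refine ⟨?_, hub i⟩
  by_contra hlb
  push_neg at hlb
  -- pick the minimizing coordinate
  obtain ⟨k, -, hkmin⟩ := Finset.exists_min_image Finset.univ x ⟨i, Finset.mem_univ i⟩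
  have hkmin' : ∀ j, x k ≤ x j := fun j => hkmin j (Finset.mem_univ j)
  have hxk : x k < -1 := lt_of_le_of_lt (hkmin' i) hlb
  set t : ℝ := (1 + 1/(r:ℝ)) / (1/(r:ℝ) - x k) with ht_def
  have hden : 0 < 1/(r:ℝ) - x k := by
    have : 0 < 1/(r:ℝ) := by positivity
    linarith
  have ht0 : 0 < t := by
    apply div_pos _ hden
    positivity
  have ht1 : t < 1 := by
    rw [ht_def, div_lt_one hden]
    linarith
  set y : Fin r → ℝ := fun j => (1 - t) * (1/(r:ℝ)) + t * x j with hy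
  have hyk : y k = -1 := by
    simp only [hy]
    have : t * (1/(r:ℝ) - x k) = 1 + 1/(r:ℝ) := by
      rw [ht_def, div_mul_cancel₀ _ hden.ne']
    nlinarith [this]
  have hysum : ∑ j, y j = 1 := by
    simp only [hy]
    rw [Finset.sum_add_distrib, ← Finset.mul_sum, ← Finset.mul_sum, hsum, Finset.sum_const,
      Finset.card_univ, Fintype.card_fin, nsmul_eq_mul]
    field_simp; ring
  have hyfeas : ∀ j, 0 ≤ ∑ i', H i' j * y i' := by
    intro j
    have h : ∀ i' : Fin r, H i' j * y i'
        = ((1 - t) * (1/(r:ℝ))) * H i' j + t * (H i' j * x i') := by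
      intro i'; simp only [hy]; ring
    rw [Finset.sum_congr rfl fun i' _ => h i', Finset.sum_add_distrib, ← Finset.mul_sum,
      ← Finset.mul_sum]
    have h1 : 0 ≤ ∑ i', H i' j := Finset.sum_nonneg fun i' _ => hH i' j
    have h2 : (0:ℝ) ≤ (1 - t) * (1/(r:ℝ)) := by
      apply mul_nonneg (by linarith) (by positivity)
    exact add_nonneg (mul_nonneg h2 h1) (mul_nonneg ht0.le (hx j))
  have hybox : ∀ j, -1 ≤ y j ∧ y j ≤ 1 := by
    intro j
    constructor
    · rw [← hyk]
      simp only [hy]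
      have := hkmin' j
      nlinarith
    · simp only [hy]
      have h1 : 1/(r:ℝ) ≤ 1 := by
        rw [div_le_one hrpos]; linarith
      nlinarith [hub j]
  have hnorm := hb y hysum hyfeas hybox
  have hysq : ∑ j, (y j)^2 ≤ 1 := by
    have h := pow_le_pow_left₀ (enorm_nonneg y) hnorm 2
    rw [enorm_sq] at h; simpa using h
  have hsplit : (y k)^2 + ∑ j ∈ Finset.univ.erase k, (y j)^2 = ∑ j, (y j)^2 :=
    Finset.add_sum_erase Finset.univ (fun j => (y j)^2) (Finset.mem_univ k)
  have hrest : ∑ j ∈ Finset.univ.erase k, (y j)^2 ≤ 0 := by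
    rw [hyk] at hsplit; nlinarith [hsplit, hysq]
  have hzero : ∀ j ∈ Finset.univ.erase k, (y j)^2 = 0 := by
    intro j hj
    have hle : y j ^ 2 ≤ ∑ j ∈ Finset.univ.erase k, y j ^ 2 :=
      Finset.single_le_sum (f := fun j => (y j)^2) (fun j _ => sq_nonneg (y j)) hj
    have := sq_nonneg (y j)
    linarith
  have hfin : ∑ j, y j = y k := by
    rw [← Finset.add_sum_erase Finset.univ y (Finset.mem_univ k)]
    have h0 : ∑ j ∈ Finset.univ.erase k, y j = 0 :=
      Finset.sum_eq_zero fun j hj =>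
        pow_eq_zero_iff (n := 2) (by norm_num) |>.mp (hzero j hj)
    rw [h0, add_zero]
  rw [hysum, hyk] at hfin
  linarith

/-- Backward: the dual inequality `‖q‖ ≤ eᵀq` for all `q` with `Hᵀq ≥ 0`. -/
lemma dual_ineq (hr : 2 ≤ r) (H : Matrix (Fin r) (Fin n) ℝ) (hH : ∀ i j, 0 ≤ H i j)
    (ncssc : ∀ i : Fin r, (fun j => (1:ℝ) - (if j = i then 1 else 0)) ∈ coneOf H)
    (hb : ∀ x : Fin r → ℝ, (∑ i, x i) = 1 → (∀ j, 0 ≤ ∑ i, H i j * x i) →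
        (∀ i, -1 ≤ x i ∧ x i ≤ 1) → enorm2 x ≤ 1)
    (q : Fin r → ℝ) (hq : ∀ j, 0 ≤ ∑ i, H i j * q i) : enorm2 q ≤ ∑ i, q i := by
  have hrR := rR hr
  set s : ℝ := ∑ i, q i with hs_def
  have hub : ∀ i, q i ≤ s := by
    intro i
    have := inner_nonneg_of_mem (ncssc i) hq
    rw [sum_one_sub_single_mul i q] at this
    linarith
  by_cases hs : 0 < s
  · -- rescale
    set x : Fin r → ℝ := fun i => q i / s with hx_def
    have hxsum : ∑ i, x i = 1 := by
      simp only [hx_def]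
      rw [← Finset.sum_div, ← hs_def, div_self hs.ne']
    have hxfeas : ∀ j, 0 ≤ ∑ i, H i j * x i := by
      intro j
      have h : ∀ i, H i j * x i = (H i j * q i) / s := fun i => by
        simp only [hx_def]; ring
      rw [Finset.sum_congr rfl fun i _ => h i, ← Finset.sum_div]
      exact div_nonneg (hq j) hs.le
    have hxbox := box_of_feasible hr H hH ncssc hb x hxsum hxfeas
    have hxnorm := hb x hxsum hxfeas hxbox
    have hq_eq : q = fun i => s * x i := by
      funext i; simp only [hx_def]; field_simp
    calc enorm2 q = s * enorm2 x := by rw [hq_eq]; exact enorm_smul s hs.le x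
      _ ≤ s * 1 := mul_le_mul_of_nonneg_left hxnorm hs.le
      _ = s := mul_one s
  · -- s ≤ 0 forces q = 0
    push_neg at hs
    have hqneg : ∀ i, q i ≤ 0 := fun i => le_trans (hub i) hs
    have hqzero : ∀ i, q i = 0 := by
      intro i0
      by_contra hqi0
      have hqi0' : q i0 < 0 := lt_of_le_of_ne (hqneg i0) hqi0
      -- every column of H vanishes at row i0
      have hHrow : ∀ j, H i0 j = 0 := by
        intro j
        have hterms : ∀ i ∈ Finset.univ, H i j * q i ≤ 0 :=
          fun i _ => mul_nonpos_of_nonneg_of_nonpos (hH i j) (hqneg i)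
        have hsumle : ∑ i, H i j * q i ≤ 0 := Finset.sum_nonpos hterms
        have hall : ∀ i ∈ Finset.univ, H i j * q i = 0 := by
          intro i hi
          have h1 := (Finset.sum_eq_zero_iff_of_nonpos hterms).mp
            (le_antisymm hsumle (hq j)) i hi
          exact h1
        have := hall i0 (Finset.mem_univ i0)
        rcases mul_eq_zero.mp this with h | h
        · exact h
        · exact absurd h hqi0'.ne
      -- contradiction with NC-SSC: pick i1 ≠ i0
      have : Nontrivial (Fin r) := Fin.nontrivial_iff_two_le.mpr hr
      obtain ⟨i1, hi1⟩ := exists_ne i0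
      obtain ⟨y, hy, hmv⟩ := ncssc i1
      have h1 : H.mulVec y i0 = 0 := by
        rw [Matrix.mulVec, dotProduct]
        exact Finset.sum_eq_zero fun j _ => by rw [hHrow j, zero_mul]
      have h2 : H.mulVec y i0 = 1 - (if i0 = i1 then 1 else 0) := by rw [hmv]
      rw [h1, if_neg hi1.symm] at h2
      norm_num at h2
    have : q = 0 := funext hqzero
    rw [this]
    have : enorm2 (0 : Fin r → ℝ) = 0 := by
      unfold enorm2; simp
    rw [this, hs_def]
    simp [hqzero]


end SSCAux

open SSCAux

/-- Theorem 4.1: `H ≥ 0` satisfies the SSC iff (i) the NC-SSC holds, and (ii) the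
maximum of `‖x‖₂` over `{x : eᵀx = 1, Hᵀx ≥ 0, -1 ≤ xᵢ ≤ 1}` equals 1 with the set
of maximizers exactly `{eᵢ}ᵢ`. -/
theorem ssc_iff_ncssc_and_qp {r n : ℕ} (hr : 2 ≤ r) (H : Matrix (Fin r) (Fin n) ℝ)
    (hH : ∀ i j, 0 ≤ H i j) :
    (sscCone r ⊆ coneOf H ∧
      ∀ q : Fin r → ℝ, (∀ j, 0 ≤ ∑ i, H i j * q i) → (∑ i, q i) = enorm2 q →
        ∃ (i : Fin r) (α : ℝ), 0 ≤ α ∧ q = fun k => α * (if k = i then 1 else 0)) ↔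
    ((∀ i : Fin r, (fun j => (1 : ℝ) - (if j = i then 1 else 0)) ∈ coneOf H) ∧
      (∀ x : Fin r → ℝ, (∑ i, x i) = 1 → (∀ j, 0 ≤ ∑ i, H i j * x i) →
        (∀ i, -1 ≤ x i ∧ x i ≤ 1) → enorm2 x ≤ 1) ∧
      {x : Fin r → ℝ | (∑ i, x i) = 1 ∧ (∀ j, 0 ≤ ∑ i, H i j * x i) ∧
          (∀ i, -1 ≤ x i ∧ x i ≤ 1) ∧ enorm2 x = 1}
        = {x : Fin r → ℝ | ∃ i : Fin r, x = fun k => if k = i then 1 else 0}) := by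
  constructor
  · rintro ⟨hssc1, hssc2⟩
    refine ⟨fun i => hssc1 (ncvec_mem_sscCone hr i),
      fun x hsum hfeas _ => qp_bound_of_ssc1 hr H hssc1 x hsum hfeas, ?_⟩
    ext x
    simp only [Set.mem_setOf_eq]
    constructor
    · rintro ⟨hsum, hfeas, hbox, hnorm⟩
      obtain ⟨i, α, hα, hxa⟩ := hssc2 x hfeas (hsum.trans hnorm.symm)
      have hαsum : ∑ k, x k = α := by
        rw [hxa, ← Finset.mul_sum, sum_ite_one i, mul_one]
      rw [hsum] at hαsum
      refine ⟨i, ?_⟩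
      rw [hxa, ← hαsum]
      funext k; rw [one_mul]
    · rintro ⟨i, rfl⟩
      refine ⟨sum_ite_one i, fun j => ?_, fun k => ?_, enorm_single i⟩
      · have h : ∑ k, H k j * (if k = i then (1:ℝ) else 0) = H i j := by
          simp [mul_ite]
        rw [h]; exact hH i j
      · refine ⟨?_, ?_⟩ <;> by_cases h : k = i <;> simp [h]
  · rintro ⟨ncssc, hb, hc⟩
    have hdual := dual_ineq hr H hH ncssc hb
    refine ⟨farkas_step hr H hdual, ?_⟩
    intro q hq hqs
    by_cases hq0 : q = 0
    · refine ⟨⟨0, by omega⟩, 0, le_refl 0, ?_⟩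
      funext k; rw [hq0]; simp
    · set N := enorm2 q with hN_def
      have hN0 : 0 < N := by
        rcases lt_or_eq_of_le (enorm_nonneg q) with h | h
        · exact h
        · exact absurd (enorm_eq_zero h.symm) hq0
      set x : Fin r → ℝ := fun i => q i / N with hx_def
      have hxsum : ∑ i, x i = 1 := by
        simp only [hx_def]
        rw [← Finset.sum_div, hqs, div_self hN0.ne']
      have hxfeas : ∀ j, 0 ≤ ∑ i, H i j * x i := by
        intro j
        have h : ∀ i, H i j * x i = (H i j * q i) / N := fun i => by
          simp only [hx_def]; ring
        rw [Finset.sum_congr rfl fun i _ => h i, ← Finset.sum_div]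
        exact div_nonneg (hq j) hN0.le
      have hqsq : ∀ i, (q i)^2 ≤ N^2 := by
        intro i
        rw [hN_def, enorm_sq]
        exact Finset.single_le_sum (f := fun i => (q i)^2)
          (fun i _ => sq_nonneg (q i)) (Finset.mem_univ i)
      have hxbox : ∀ i, -1 ≤ x i ∧ x i ≤ 1 := by
        intro i
        have h1 : -N ≤ q i := by nlinarith [hqsq i]
        have h2 : q i ≤ N := by nlinarith [hqsq i]
        constructor
        · rw [hx_def]
          rw [le_div_iff₀ hN0]; linarith
        · rw [hx_def]
          rw [div_le_one hN0]; exact h2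
      have hxnorm : enorm2 x = 1 := by
        have hx' : x = fun i => (1/N) * q i := by
          funext i; simp only [hx_def]; ring
        rw [hx', enorm_smul (1/N) (by positivity) q, ← hN_def]
        field_simp
      have hmem : x ∈ {x : Fin r → ℝ | (∑ i, x i) = 1 ∧ (∀ j, 0 ≤ ∑ i, H i j * x i) ∧
          (∀ i, -1 ≤ x i ∧ x i ≤ 1) ∧ enorm2 x = 1} := ⟨hxsum, hxfeas, hxbox, hxnorm⟩
      rw [hc] at hmem
      obtain ⟨i, hxi⟩ := hmem
      refine ⟨i, N, hN0.le, ?_⟩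
      funext k
      have : x k = if k = i then (1:ℝ) else 0 := by rw [hxi]
      rw [hx_def] at this
      simp only at this
      field_simp at this
      rw [this]
end
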